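/- With the Levi-Civita invariant polynomial on so(2n,2), the transgression between A = ω + e and Ā = ω (same spin connection) evaluates to the Lanczos–Lovelock form: Q_{ω+e←ω}^{(2n+1)} = ((n+1)/ℓ) ε_{a₁···a_{2n+1}} ∫₀¹ dt F_t^{a₁a₂}···F_t^{a_{2n-1}a_{2n}} e^{a_{2n+1}} (up to the normalization 2ⁿ factors), where F_t^{ab} = R^{ab} + (t²/ℓ²)e^a e^b, with no explicit torsion dependence. -/

import Mathlib

open scoped BigOperators

/-- With the Levi-Civita invariant polynomial on `so(2n,2)`
(`⟨J_{a₁a₂}⋯J_{a_{2n-1}a_{2n}}P_{a_{2n+1}}⟩ ∝ ε_{a₁⋯a_{2n+1}}/ℓ`, all other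
combinations zero), the transgression between `A = ω + e` and `Ā = ω` (same spin
connection) evaluates to the Lanczos–Lovelock form
`Q_{ω+e←ω} = ((n+1)/ℓ) ε_{a₁⋯a_{2n+1}} ∫₀¹ dt F_t^{a₁a₂}⋯F_t^{a_{2n-1}a_{2n}} e^{a_{2n+1}}`
(up to the `2ⁿ` normalization factors), where `F_t^{ab} = R^{ab} + (t²/ℓ²)e^a e^b`,
with no explicit torsion dependence.

Here `so(2n,2)`-valued forms are represented by their components:
an element of `V = (J-components, P-components)`; `ε` is realized by a signed sum
over permutations of the `2n+1` Lorentz indices. -/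
theorem lanczos_lovelock_transgression
    (S : Type) [NormedCommRing S] [NormedAlgebra ℝ S]   -- scalar differential forms on M
    (d : S → S)
    (n : ℕ) (ℓ : ℝ) (hℓ : ℓ ≠ 0)
    -- vielbein and spin connection components
    (ec : Fin (2 * n + 1) → S) (ωc : Fin (2 * n + 1) → Fin (2 * n + 1) → S)
    -- Lorentz curvature and torsion
    (R : Fin (2 * n + 1) → Fin (2 * n + 1) → S)
    (hR : ∀ a b, R a b = d (ωc a b) + ∑ c, ωc a c * ωc c b)
    (T : Fin (2 * n + 1) → S)
    (hT : ∀ a, T a = d (ec a) + ∑ b, ωc a b * ec b)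
    -- the curvature of A_t = ω + t e, in components:
    -- F_t = ½(R^{ab} + (t²/ℓ²)e^a e^b)J_{ab} + tT^a P_a
    (Ft : ℝ → (Fin (2 * n + 1) → Fin (2 * n + 1) → S) × (Fin (2 * n + 1) → S))
    (hFt : ∀ t, Ft t
      = (fun a b => R a b + ((t ^ 2) / (ℓ ^ 2)) • (ec a * ec b), fun a => t • T a))
    -- θ = A - Ā = e^a P_a
    (θ : (Fin (2 * n + 1) → Fin (2 * n + 1) → S) × (Fin (2 * n + 1) → S))
    (hθ : θ = (0, ec))
    -- the Levi-Civita invariant polynomial, in components: it picks exactly one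
    -- P-entry and contracts all J-entries with the ε-symbol
    (P : (Fin (n + 1) → (Fin (2 * n + 1) → Fin (2 * n + 1) → S) × (Fin (2 * n + 1) → S)) → S)
    (hP : ∀ Z, P Z = (1 / ℓ) •
      ∑ i : Fin (n + 1), ∑ σ : Equiv.Perm (Fin (2 * n + 1)),
        (Equiv.Perm.sign σ : ℤ) •
          ((∏ k : Fin n,
              (Z (i.succAbove k)).1
                (σ ⟨2 * (k : ℕ), by have := k.isLt; omega⟩)
                (σ ⟨2 * (k : ℕ) + 1, by have := k.isLt; omega⟩)) *
            (Z i).2 (σ ⟨2 * n, by omega⟩)))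
    -- the transgression form Q_{ω+e←ω} = (n+1)∫₀¹⟨θ F_t^n⟩dt
    (Q : S)
    (hQ : Q = (n + 1 : ℝ) • ∫ t in (0 : ℝ)..1, P (Fin.cons θ fun _ => Ft t)) :
    Q = ((n + 1 : ℝ) / ℓ) •
      ∑ σ : Equiv.Perm (Fin (2 * n + 1)),
        (Equiv.Perm.sign σ : ℤ) •
          ∫ t in (0 : ℝ)..1,
            (∏ k : Fin n,
              (R (σ ⟨2 * (k : ℕ), by have := k.isLt; omega⟩)
                 (σ ⟨2 * (k : ℕ) + 1, by have := k.isLt; omega⟩)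
               + ((t ^ 2) / (ℓ ^ 2)) •
                   (ec (σ ⟨2 * (k : ℕ), by have := k.isLt; omega⟩) *
                    ec (σ ⟨2 * (k : ℕ) + 1, by have := k.isLt; omega⟩)))) *
            ec (σ ⟨2 * n, by omega⟩) := by

  -- abbreviate the integrand
  have key : ∀ t : ℝ, P (Fin.cons θ fun _ => Ft t) = (1 / ℓ) •
      ∑ σ : Equiv.Perm (Fin (2 * n + 1)),
        (Equiv.Perm.sign σ : ℤ) •
          ((∏ k : Fin n,
              (R (σ ⟨2 * (k : ℕ), by have := k.isLt; omega⟩)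
                 (σ ⟨2 * (k : ℕ) + 1, by have := k.isLt; omega⟩)
               + ((t ^ 2) / (ℓ ^ 2)) •
                   (ec (σ ⟨2 * (k : ℕ), by have := k.isLt; omega⟩) *
                    ec (σ ⟨2 * (k : ℕ) + 1, by have := k.isLt; omega⟩)))) *
            ec (σ ⟨2 * n, by omega⟩)) := by
    intro t
    rw [hP]
    congr 1
    rw [Finset.sum_eq_single (0 : Fin (n + 1))]
    · refine Finset.sum_congr rfl fun σ _ => ?_
      simp only [Fin.succAbove_zero, Fin.cons_succ, Fin.cons_zero, hFt, hθ]
    · intro i _ hi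
      have hn : 0 < n := by
        have h1 := i.isLt
        have h2 : (i : ℕ) ≠ 0 := fun h => hi (Fin.ext h)
        omega
      refine Finset.sum_eq_zero fun σ _ => ?_
      have hsa : i.succAbove ⟨0, hn⟩ = 0 := by
        have : Fin.castSucc (⟨0, hn⟩ : Fin n) < i := by
          have h2 : (i : ℕ) ≠ 0 := fun h => hi (Fin.ext h)
          rw [Fin.lt_def]; show 0 < (i : ℕ)
          omega
        exact (Fin.succAbove_of_castSucc_lt _ _ this).trans rfl
      rw [Finset.prod_eq_zero (Finset.mem_univ (⟨0, hn⟩ : Fin n))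
        (by rw [hsa, Fin.cons_zero, hθ]; rfl), zero_mul, smul_zero]
    · intro h; exact absurd (Finset.mem_univ _) h
  -- main computation
  rw [hQ]
  simp only [key]
  rw [intervalIntegral.integral_smul, smul_smul, mul_one_div]
  congr 1
  rw [intervalIntegral.integral_finset_sum]
  · refine Finset.sum_congr rfl fun σ _ => ?_
    simp only [← Int.cast_smul_eq_zsmul ℝ]
    rw [intervalIntegral.integral_smul]
  · intro σ _
    apply Continuous.intervalIntegrable
    apply Continuous.zsmul
    apply Continuous.mul
    · apply continuous_finset_prod
      intro k _
      exact continuous_const.add (((continuous_pow 2).div_const _).smul continuous_const)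
    · exact continuous_const
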